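/- Let f: C → D and g: D → E be F[[U]]-linear chain maps between finitely generated chain complexes over F[[U]]. Write C_N = C ⊗_{F[[U]]} F[[U]]/(U^N) and similarly f_N, g_N. If for infinitely many N the sequence H(C_N) → H(D_N) → H(E_N) induced by f_N, g_N is exact at H(D_N), then H(C) → H(D) → H(E) is exact at H(D). -/

import Mathlib

/-- The ideal `(U^N) ⊆ F⟦U⟧` for `F = ℤ/2ℤ`. -/
noncomputable abbrev JspanN (N : ℕ) : Ideal (PowerSeries (ZMod 2)) :=
  Ideal.span {PowerSeries.X ^ N}

section Aux

local notation "R2" => PowerSeries (ZMod 2)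

lemma JspanN_smul_mono {M : Type*} [AddCommGroup M] [Module R2 M] {N N' : ℕ} (h : N ≤ N') :
    JspanN N' • (⊤ : Submodule R2 M) ≤ JspanN N • ⊤ :=
  Submodule.smul_mono_left (Ideal.span_singleton_le_span_singleton.mpr (pow_dvd_pow _ h))

lemma jspan_closed0 {k : ℕ} (S : Submodule R2 (Fin k → R2)) (v : Fin k → R2)
    (h : ∀ N : ℕ, v ∈ S ⊔ JspanN N • (⊤ : Submodule R2 (Fin k → R2))) : v ∈ S := by
  have hIne : (Ideal.span {(PowerSeries.X : R2)}) ≠ ⊤ := by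
    rw [← PowerSeries.maximalIdeal_eq_span_X]
    exact IsLocalRing.maximalIdeal.isMaximal _ |>.ne_top
  have hbot : (⨅ i : ℕ, (Ideal.span {(PowerSeries.X : R2)}) ^ i • ⊤ :
      Submodule R2 ((Fin k → R2) ⧸ S)) = ⊥ :=
    Ideal.iInf_pow_smul_eq_bot_of_isLocalRing _ hIne
  have hq : Submodule.Quotient.mk (p := S) v = 0 := by
    rw [← Submodule.mem_bot (R := R2), ← hbot, Submodule.mem_iInf]
    intro N
    obtain ⟨s, hs, w, hw, hsw⟩ := Submodule.mem_sup.mp (h N)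
    have heq : Submodule.Quotient.mk (p := S) v = Submodule.mkQ S w := by
      rw [← hsw]
      simp [Submodule.mkQ_apply, Submodule.Quotient.mk_add,
        (Submodule.Quotient.mk_eq_zero _).mpr hs]
    rw [heq, Ideal.span_singleton_pow]
    have hmap := Submodule.mem_map_of_mem (f := S.mkQ) hw
    rw [Submodule.map_smul''] at hmap
    exact Submodule.smul_mono le_rfl le_top hmap
  exact (Submodule.Quotient.mk_eq_zero S).mp hq

lemma jspan_closed {M : Type*} [AddCommGroup M] [Module R2 M] [Module.Finite R2 M]
    (S : Submodule R2 M) (v : M)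
    (h : ∀ N : ℕ, v ∈ S ⊔ JspanN N • (⊤ : Submodule R2 M)) : v ∈ S := by
  obtain ⟨k, π, hπ⟩ := Module.Finite.exists_fin' R2 M
  obtain ⟨v', hv'⟩ := hπ v
  have hv'mem : v' ∈ S.comap π := by
    apply jspan_closed0
    intro N
    obtain ⟨s, hs, w, hw, hsw⟩ := Submodule.mem_sup.mp (h N)
    have hweq : w ∈ Submodule.map π (JspanN N • (⊤ : Submodule R2 (Fin k → R2))) := by
      rw [Submodule.map_smul'', Submodule.map_top, LinearMap.range_eq_top.mpr hπ]
      exact hw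
    obtain ⟨w', hw', hw'eq⟩ := hweq
    refine Submodule.mem_sup.mpr ⟨v' - w', ?_, w', hw', by abel⟩
    have : π (v' - w') = s := by rw [map_sub, hv', hw'eq, ← hsw]; abel
    simpa [Submodule.mem_comap, this] using hs
  rw [← hv']
  exact hv'mem

lemma prod_mem_smul {M M' : Type*} [AddCommGroup M] [Module R2 M]
    [AddCommGroup M'] [Module R2 M'] {I : Ideal R2} {u : M} {w : M'}
    (hu : u ∈ I • (⊤ : Submodule R2 M)) (hw : w ∈ I • (⊤ : Submodule R2 M')) :
    (u, w) ∈ I • (⊤ : Submodule R2 (M × M')) := by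
  have h1 : ((u, 0) : M × M') ∈ I • (⊤ : Submodule R2 (M × M')) := by
    have := Submodule.mem_map_of_mem (f := LinearMap.inl R2 M M') hu
    rw [Submodule.map_smul''] at this
    exact Submodule.smul_mono le_rfl le_top this
  have h2 : ((0, w) : M × M') ∈ I • (⊤ : Submodule R2 (M × M')) := by
    have := Submodule.mem_map_of_mem (f := LinearMap.inr R2 M M') hw
    rw [Submodule.map_smul''] at this
    exact Submodule.smul_mono le_rfl le_top this
  simpa using Submodule.add_mem _ h1 h2

end Aux

/-- Approximation lemma: let `f : C → D`, `g : D → E` be `F⟦U⟧`-linear chain maps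
between finitely generated chain complexes over `F⟦U⟧` (`F = ℤ/2ℤ`).  If for
infinitely many `N` the sequence `H(C_N) → H(D_N) → H(E_N)` induced by `f, g` on the
reductions mod `U^N` is exact at `H(D_N)` (expressed elementwise), then
`H(C) → H(D) → H(E)` is exact at `H(D)`. -/
theorem stmt8
    (C D E : ℤ → Type*) [∀ n, AddCommGroup (C n)] [∀ n, AddCommGroup (D n)]
    [∀ n, AddCommGroup (E n)]
    [∀ n, Module (PowerSeries (ZMod 2)) (C n)] [∀ n, Module (PowerSeries (ZMod 2)) (D n)]
    [∀ n, Module (PowerSeries (ZMod 2)) (E n)]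
    [∀ n, Module.Finite (PowerSeries (ZMod 2)) (C n)]
    [∀ n, Module.Finite (PowerSeries (ZMod 2)) (D n)]
    [∀ n, Module.Finite (PowerSeries (ZMod 2)) (E n)]
    (dC : ∀ n : ℤ, C (n + 1) →ₗ[PowerSeries (ZMod 2)] C n)
    (dD : ∀ n : ℤ, D (n + 1) →ₗ[PowerSeries (ZMod 2)] D n)
    (dE : ∀ n : ℤ, E (n + 1) →ₗ[PowerSeries (ZMod 2)] E n)
    (hdC : ∀ n : ℤ, (dC n) ∘ₗ (dC (n + 1)) = 0)
    (hdD : ∀ n : ℤ, (dD n) ∘ₗ (dD (n + 1)) = 0)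
    (hdE : ∀ n : ℤ, (dE n) ∘ₗ (dE (n + 1)) = 0)
    (f : ∀ n : ℤ, C n →ₗ[PowerSeries (ZMod 2)] D n)
    (g : ∀ n : ℤ, D n →ₗ[PowerSeries (ZMod 2)] E n)
    (hf : ∀ n : ℤ, (f n) ∘ₗ (dC n) = (dD n) ∘ₗ (f (n + 1)))
    (hg : ∀ n : ℤ, (g n) ∘ₗ (dD n) = (dE n) ∘ₗ (g (n + 1)))
    (hinf : {N : ℕ |
      ∀ (n : ℤ) (y : D (n + 1)),
        dD n y ∈ (JspanN N • (⊤ : Submodule (PowerSeries (ZMod 2)) (D n))) →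
        (g (n + 1) y ∈ LinearMap.range (dE (n + 1)) ⊔
            (JspanN N • (⊤ : Submodule (PowerSeries (ZMod 2)) (E (n + 1)))) ↔
          ∃ x : C (n + 1),
            dC n x ∈ (JspanN N • (⊤ : Submodule (PowerSeries (ZMod 2)) (C n))) ∧
            y - f (n + 1) x ∈ LinearMap.range (dD (n + 1)) ⊔
              (JspanN N • (⊤ : Submodule (PowerSeries (ZMod 2)) (D (n + 1)))))}.Infinite) :
    ∀ (n : ℤ) (y : D (n + 1)), dD n y = 0 →
      (g (n + 1) y ∈ LinearMap.range (dE (n + 1)) ↔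
        ∃ x : C (n + 1), dC n x = 0 ∧ y - f (n + 1) x ∈ LinearMap.range (dD (n + 1))) := by
  intro n y hy
  constructor
  · intro hgy
    -- package the two conditions into one linear map
    set R2 := PowerSeries (ZMod 2)
    let φ : (C (n+1) × D (n+1+1)) →ₗ[R2] (D (n+1) × C n) :=
      LinearMap.prod
        ((f (n+1)).comp (LinearMap.fst R2 (C (n+1)) (D (n+1+1))) +
          (dD (n+1)).comp (LinearMap.snd R2 (C (n+1)) (D (n+1+1))))
        ((dC n).comp (LinearMap.fst R2 (C (n+1)) (D (n+1+1))))
    have hmem : ((y, 0) : D (n+1) × C n) ∈ LinearMap.range φ := by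
      apply jspan_closed
      intro N
      obtain ⟨N', hN'mem, hNN'⟩ := hinf.exists_gt N
      have hiff := hN'mem n y (by rw [hy]; exact Submodule.zero_mem _)
      obtain ⟨x, hx1, hx2⟩ := hiff.mp (Submodule.mem_sup_left hgy)
      obtain ⟨a, ha, u, hu, hau⟩ := Submodule.mem_sup.mp hx2
      obtain ⟨z, hz⟩ := ha
      have heq : ((y, 0) : D (n+1) × C n) = φ (x, z) + (u, -(dC n x)) := by
        have h1 : y = f (n+1) x + dD (n+1) z + u := by
          have : y = f (n+1) x + (a + u) := by rw [hau]; abel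
          rw [this, hz]; abel
        ext
        · simpa [φ] using h1
        · simp [φ]
      rw [heq]
      refine Submodule.add_mem _ (Submodule.mem_sup_left ⟨(x, z), rfl⟩)
        (Submodule.mem_sup_right (prod_mem_smul ?_ ?_))
      · exact JspanN_smul_mono hNN'.le hu
      · exact JspanN_smul_mono hNN'.le (Submodule.neg_mem _ hx1)
    obtain ⟨⟨x, z⟩, hxz⟩ := hmem
    have h1 : f (n+1) x + dD (n+1) z = y := congrArg Prod.fst hxz
    have h2 : dC n x = 0 := congrArg Prod.snd hxz
    exact ⟨x, h2, ⟨z, by rw [← h1]; abel⟩⟩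
  · rintro ⟨x, hx1, hx2⟩
    apply jspan_closed (LinearMap.range (dE (n+1)))
    intro N
    obtain ⟨N', hN'mem, hNN'⟩ := hinf.exists_gt N
    have hiff := hN'mem n y (by rw [hy]; exact Submodule.zero_mem _)
    have hmem := hiff.mpr ⟨x, by rw [hx1]; exact Submodule.zero_mem _,
      Submodule.mem_sup_left hx2⟩
    have hle := sup_le_sup_left (JspanN_smul_mono (M := E (n+1)) hNN'.le) (LinearMap.range (dE (n+1)))
    exact hle hmem
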